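/- The Dirichlet classifier with temperature centering is consistent on the block model: if p > q, then for every choice of block sizes n_1,...,n_K and seed counts s_1,...,s_K (with 0 < s_k < n_k), every free node of block k is assigned label k, i.e. k is the unique maximizer over labels l of the centered temperature Δ_k^{(l)} = T_k^{(l)} - T̄^{(l)}. -/

import Mathlib

set_option maxHeartbeats 1000000

/-- Consistency of the centered Dirichlet classifier on the block model: if
`p > q`, for every free node of block `k` the label `k` is the unique maximizer
of the centered temperature `Δ_k^{(l)} = T_k^{(l)} - T̄^{(l)}`. -/
theorem dirichlet_classifier_consistent (K : ℕ) [NeZero K]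
    (nv sv : Fin K → ℕ) (hs : ∀ k, 0 < sv k ∧ sv k < nv k)
    (p q : ℝ) (hq : 0 < q) (hpq : q < p)
    (n : ℕ) (hn : n = ∑ k, nv k)
    (T : Fin K → Fin K → ℝ)
    (hbal : ∀ l k, ((nv k : ℝ) * (p - q) + (n : ℝ) * q) * T l k =
      (sv l : ℝ) * (if k = l then p else q) + ((nv k : ℝ) - (sv k : ℝ)) * p * T l k +
        ∑ j ∈ Finset.univ.erase k, ((nv j : ℝ) - (sv j : ℝ)) * q * T l j)
    (Tbar : Fin K → ℝ)
    (hTbar : ∀ l, Tbar l = ((sv l : ℝ) + ∑ j, ((nv j : ℝ) - (sv j : ℝ)) * T l j) / (n : ℝ)) :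
    ∀ k l, l ≠ k → T l k - Tbar l < T k k - Tbar k := by
  intro k l hlk
  haveI : Nonempty (Fin K) := ⟨⟨0, Nat.pos_of_ne_zero (NeZero.ne K)⟩⟩
  have hr : (0:ℝ) < p - q := by linarith
  have hsR : ∀ j, (0:ℝ) < (sv j : ℝ) := fun j => by exact_mod_cast (hs j).1
  have hfR : ∀ j, (0:ℝ) < ((nv j : ℝ) - (sv j : ℝ)) := by
    intro j
    have h2 : (sv j : ℝ) < (nv j : ℝ) := by exact_mod_cast (hs j).2
    linarith
  have hnpos : (0:ℝ) < (n : ℝ) := by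
    have h1 : 0 < n := by
      rw [hn]
      exact Finset.sum_pos' (fun i _ => Nat.zero_le _)
        ⟨k, Finset.mem_univ k, lt_trans (hs k).1 (hs k).2⟩
    exact_mod_cast h1
  have hD : ∀ j : Fin K, (0:ℝ) < ((sv j : ℝ) * (p - q) + (n : ℝ) * q) :=
    fun j => add_pos (mul_pos (hsR j) hr) (mul_pos hnpos hq)
  -- key balance equation in solved form
  have key : ∀ m j : Fin K, ((sv j : ℝ) * (p - q) + (n : ℝ) * q) * T m j =
      (sv m : ℝ) * (if j = m then p else q) + q * (∑ y, ((nv y : ℝ) - (sv y : ℝ)) * T m y) := by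
    intro m j
    have h := hbal m j
    rw [Finset.sum_erase_eq_sub (Finset.mem_univ j)] at h
    have hsum : (∑ x, ((nv x : ℝ) - (sv x : ℝ)) * q * T m x) = q * (∑ y, ((nv y : ℝ) - (sv y : ℝ)) * T m y) := by
      rw [Finset.mul_sum]
      exact Finset.sum_congr rfl fun x _ => by ring
    rw [hsum] at h
    linear_combination h
  have hT : ∀ m j : Fin K, T m j =
      ((sv m : ℝ) * (if j = m then p else q) + q * (∑ y, ((nv y : ℝ) - (sv y : ℝ)) * T m y)) / ((sv j : ℝ) * (p - q) + (n : ℝ) * q) := by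
    intro m j
    exact eq_div_of_mul_eq (hD j).ne' (by linarith [key m j])
  -- q * A < 1
  have hF : (∑ x, ((nv x : ℝ) - (sv x : ℝ))) < (n:ℝ) := by
    have hcast : (n:ℝ) = ∑ x, (nv x : ℝ) := by rw [hn]; push_cast; rfl
    rw [hcast]
    refine Finset.sum_lt_sum_of_nonempty Finset.univ_nonempty ?_
    intro x _
    linarith [hsR x]
  have hqA : q * (∑ z, ((nv z : ℝ) - (sv z : ℝ)) / ((sv z : ℝ) * (p - q) + (n : ℝ) * q)) < 1 := by
    have hstep : ∀ x ∈ Finset.univ, q * (((nv x : ℝ) - (sv x : ℝ)) / ((sv x : ℝ) * (p - q) + (n : ℝ) * q)) < ((nv x : ℝ) - (sv x : ℝ)) / (n:ℝ) := by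
      intro x _
      rw [mul_div_assoc']
      rw [div_lt_div_iff₀ (hD x) hnpos]
      nlinarith [mul_pos (hfR x) (mul_pos (hsR x) hr)]
    calc q * (∑ z, ((nv z : ℝ) - (sv z : ℝ)) / ((sv z : ℝ) * (p - q) + (n : ℝ) * q)) = ∑ x, q * (((nv x : ℝ) - (sv x : ℝ)) / ((sv x : ℝ) * (p - q) + (n : ℝ) * q)) := by rw [Finset.mul_sum]
      _ < ∑ x, ((nv x : ℝ) - (sv x : ℝ)) / (n:ℝ) := Finset.sum_lt_sum_of_nonempty Finset.univ_nonempty hstep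
      _ = (∑ x, ((nv x : ℝ) - (sv x : ℝ))) / (n:ℝ) := by rw [Finset.sum_div]
      _ < 1 := (div_lt_one hnpos).mpr hF
  have hBpos : 0 < 1 - q * (∑ z, ((nv z : ℝ) - (sv z : ℝ)) / ((sv z : ℝ) * (p - q) + (n : ℝ) * q)) := by linarith
  -- self-consistency
  have hSC : ∀ m, (∑ y, ((nv y : ℝ) - (sv y : ℝ)) * T m y) * (1 - q * (∑ z, ((nv z : ℝ) - (sv z : ℝ)) / ((sv z : ℝ) * (p - q) + (n : ℝ) * q))) = (sv m : ℝ) * (∑ z, ((nv z : ℝ) - (sv z : ℝ)) * (if z = m then p else q) / ((sv z : ℝ) * (p - q) + (n : ℝ) * q)) := by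
    intro m
    have h1 : (∑ y, ((nv y : ℝ) - (sv y : ℝ)) * T m y) = ∑ x, ((sv m : ℝ) * (((nv x : ℝ) - (sv x : ℝ)) * (if x = m then p else q) / ((sv x : ℝ) * (p - q) + (n : ℝ) * q))
        + q * (∑ y, ((nv y : ℝ) - (sv y : ℝ)) * T m y) * (((nv x : ℝ) - (sv x : ℝ)) / ((sv x : ℝ) * (p - q) + (n : ℝ) * q))) := by
      refine Finset.sum_congr rfl ?_
      intro x _
      rw [hT m x]
      ring
    have h2 : (∑ x, ((sv m : ℝ) * (((nv x : ℝ) - (sv x : ℝ)) * (if x = m then p else q) / ((sv x : ℝ) * (p - q) + (n : ℝ) * q))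
        + q * (∑ y, ((nv y : ℝ) - (sv y : ℝ)) * T m y) * (((nv x : ℝ) - (sv x : ℝ)) / ((sv x : ℝ) * (p - q) + (n : ℝ) * q))))
        = (sv m : ℝ) * (∑ z, ((nv z : ℝ) - (sv z : ℝ)) * (if z = m then p else q) / ((sv z : ℝ) * (p - q) + (n : ℝ) * q)) + q * (∑ y, ((nv y : ℝ) - (sv y : ℝ)) * T m y) * (∑ z, ((nv z : ℝ) - (sv z : ℝ)) / ((sv z : ℝ) * (p - q) + (n : ℝ) * q)) := by
      rw [Finset.sum_add_distrib, ← Finset.mul_sum, ← Finset.mul_sum]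
    have h3 := h1.trans h2
    linear_combination h3
  have hCpos : ∀ m : Fin K, 0 < (∑ z, ((nv z : ℝ) - (sv z : ℝ)) * (if z = m then p else q) / ((sv z : ℝ) * (p - q) + (n : ℝ) * q)) := by
    intro m
    refine Finset.sum_pos ?_ Finset.univ_nonempty
    intro x _
    refine div_pos (mul_pos (hfR x) ?_) (hD x)
    split_ifs
    · linarith
    · exact hq
  have hSpos : ∀ m : Fin K, 0 < (∑ y, ((nv y : ℝ) - (sv y : ℝ)) * T m y) := by
    intro m
    by_contra hc
    push_neg at hc
    nlinarith [hSC m, mul_pos (hsR m) (hCpos m), hBpos, hc]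
  -- C k = qA + (p-q) f_k / D_k
  have hCk : (∑ z, ((nv z : ℝ) - (sv z : ℝ)) * (if z = k then p else q) / ((sv z : ℝ) * (p - q) + (n : ℝ) * q)) = q * (∑ z, ((nv z : ℝ) - (sv z : ℝ)) / ((sv z : ℝ) * (p - q) + (n : ℝ) * q)) + (p - q) * (((nv k : ℝ) - (sv k : ℝ)) / ((sv k : ℝ) * (p - q) + (n : ℝ) * q)) := by
    have h1 : ∀ x ∈ Finset.univ, ((nv x : ℝ) - (sv x : ℝ)) * (if x = k then p else q) / ((sv x : ℝ) * (p - q) + (n : ℝ) * q)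
        = q * (((nv x : ℝ) - (sv x : ℝ)) / ((sv x : ℝ) * (p - q) + (n : ℝ) * q)) + (if x = k then (p - q) * (((nv x : ℝ) - (sv x : ℝ)) / ((sv x : ℝ) * (p - q) + (n : ℝ) * q)) else 0) := by
      intro x _
      split_ifs with h
      · ring
      · ring
    rw [Finset.sum_congr rfl h1, Finset.sum_add_distrib, ← Finset.mul_sum,
      Finset.sum_ite_eq' Finset.univ k (fun x => (p - q) * (((nv x : ℝ) - (sv x : ℝ)) / ((sv x : ℝ) * (p - q) + (n : ℝ) * q)))]
    simp
  -- n (1 - qA) = Σ s + (p-q) Σ s_x f_x / D_x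
  have hnB : (n:ℝ) * (1 - q * (∑ z, ((nv z : ℝ) - (sv z : ℝ)) / ((sv z : ℝ) * (p - q) + (n : ℝ) * q)))
      = (∑ x, (sv x : ℝ)) + (p - q) * ∑ x, (sv x : ℝ) * (((nv x : ℝ) - (sv x : ℝ)) / ((sv x : ℝ) * (p - q) + (n : ℝ) * q)) := by
    have h1 : ∀ x ∈ Finset.univ, (n:ℝ) * (q * (((nv x : ℝ) - (sv x : ℝ)) / ((sv x : ℝ) * (p - q) + (n : ℝ) * q)))
        = ((nv x : ℝ) - (sv x : ℝ)) - (p - q) * ((sv x : ℝ) * (((nv x : ℝ) - (sv x : ℝ)) / ((sv x : ℝ) * (p - q) + (n : ℝ) * q))) := by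
      intro x _
      have hDx := (hD x).ne'
      field_simp
      ring
    have h2 : (n:ℝ) * (1 - q * (∑ z, ((nv z : ℝ) - (sv z : ℝ)) / ((sv z : ℝ) * (p - q) + (n : ℝ) * q))) = (n:ℝ) - ∑ x, (n:ℝ) * (q * (((nv x : ℝ) - (sv x : ℝ)) / ((sv x : ℝ) * (p - q) + (n : ℝ) * q))) := by
      have e : (n:ℝ) * (q * (∑ z, ((nv z : ℝ) - (sv z : ℝ)) / ((sv z : ℝ) * (p - q) + (n : ℝ) * q))) = ∑ x, (n:ℝ) * (q * (((nv x : ℝ) - (sv x : ℝ)) / ((sv x : ℝ) * (p - q) + (n : ℝ) * q))) := by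
        simp only [Finset.mul_sum]
      rw [mul_sub, mul_one, e]
    have h3 : (n:ℝ) = (∑ x, (sv x : ℝ)) + ∑ x, ((nv x : ℝ) - (sv x : ℝ)) := by
      rw [hn]
      push_cast
      rw [← Finset.sum_add_distrib]
      exact Finset.sum_congr rfl fun x _ => by ring
    rw [h2, Finset.sum_congr rfl h1, Finset.sum_sub_distrib, ← Finset.mul_sum]
    linarith [h3]
  have hsum1 : (sv k : ℝ) + (sv l : ℝ) ≤ ∑ x, (sv x : ℝ) := by
    have hsub := Finset.sum_le_sum_of_subset_of_nonneg (Finset.subset_univ ({k, l} : Finset (Fin K)))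
      (fun i _ _ => (hsR i).le)
    rwa [Finset.sum_pair (Ne.symm hlk)] at hsub
  have hsum2 : (sv k : ℝ) * (((nv k : ℝ) - (sv k : ℝ)) / ((sv k : ℝ) * (p - q) + (n : ℝ) * q)) ≤ ∑ x, (sv x : ℝ) * (((nv x : ℝ) - (sv x : ℝ)) / ((sv x : ℝ) * (p - q) + (n : ℝ) * q)) :=
    Finset.single_le_sum (f := fun x => (sv x : ℝ) * (((nv x : ℝ) - (sv x : ℝ)) / ((sv x : ℝ) * (p - q) + (n : ℝ) * q)))
      (fun x _ => (mul_pos (hsR x) (div_pos (hfR x) (hD x))).le) (Finset.mem_univ k)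
  have hkn : (sv k : ℝ) + (∑ y, ((nv y : ℝ) - (sv y : ℝ)) * T k y) < (n:ℝ) := by
    have h1 : (sv k : ℝ) * (1 - q * (∑ z, ((nv z : ℝ) - (sv z : ℝ)) / ((sv z : ℝ) * (p - q) + (n : ℝ) * q))) + (∑ y, ((nv y : ℝ) - (sv y : ℝ)) * T k y) * (1 - q * (∑ z, ((nv z : ℝ) - (sv z : ℝ)) / ((sv z : ℝ) * (p - q) + (n : ℝ) * q)))
        < (n:ℝ) * (1 - q * (∑ z, ((nv z : ℝ) - (sv z : ℝ)) / ((sv z : ℝ) * (p - q) + (n : ℝ) * q))) := by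
      rw [hSC k, hCk, hnB]
      have hr2 : (p - q) * ((sv k : ℝ) * (((nv k : ℝ) - (sv k : ℝ)) / ((sv k : ℝ) * (p - q) + (n : ℝ) * q)))
          ≤ (p - q) * ∑ x, (sv x : ℝ) * (((nv x : ℝ) - (sv x : ℝ)) / ((sv x : ℝ) * (p - q) + (n : ℝ) * q)) :=
        mul_le_mul_of_nonneg_left hsum2 hr.le
      nlinarith [hsR l, hr2, hsum1]
    have h2 : ((sv k : ℝ) + (∑ y, ((nv y : ℝ) - (sv y : ℝ)) * T k y)) * (1 - q * (∑ z, ((nv z : ℝ) - (sv z : ℝ)) / ((sv z : ℝ) * (p - q) + (n : ℝ) * q))) < (n:ℝ) * (1 - q * (∑ z, ((nv z : ℝ) - (sv z : ℝ)) / ((sv z : ℝ) * (p - q) + (n : ℝ) * q))) := by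
      nlinarith [h1]
    exact (mul_lt_mul_iff_of_pos_right hBpos).mp h2
  -- final assembly
  have e1 := key k k
  have e2 := key l k
  rw [if_pos rfl] at e1
  rw [if_neg (Ne.symm hlk)] at e2
  have hT1 : (n:ℝ) * Tbar k = (sv k : ℝ) + (∑ y, ((nv y : ℝ) - (sv y : ℝ)) * T k y) := by
    rw [hTbar k]
    field_simp
  have hT2 : (n:ℝ) * Tbar l = (sv l : ℝ) + (∑ y, ((nv y : ℝ) - (sv y : ℝ)) * T l y) := by
    rw [hTbar l]
    field_simp
  have hX : ((sv k : ℝ) * (p - q) + (n : ℝ) * q) * (n:ℝ) * ((T k k - Tbar k) - (T l k - Tbar l))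
      = (sv k : ℝ) * (p - q) * ((n:ℝ) + ((sv l : ℝ) + (∑ y, ((nv y : ℝ) - (sv y : ℝ)) * T l y)) - ((sv k : ℝ) + (∑ y, ((nv y : ℝ) - (sv y : ℝ)) * T k y))) := by
    linear_combination (n:ℝ) * e1 - (n:ℝ) * e2 - ((sv k : ℝ) * (p - q) + (n : ℝ) * q) * hT1 + ((sv k : ℝ) * (p - q) + (n : ℝ) * q) * hT2
  have hbr : 0 < (n:ℝ) + ((sv l : ℝ) + (∑ y, ((nv y : ℝ) - (sv y : ℝ)) * T l y)) - ((sv k : ℝ) + (∑ y, ((nv y : ℝ) - (sv y : ℝ)) * T k y)) := by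
    linarith [hSpos l, hsR l, hkn]
  have hP : 0 < (sv k : ℝ) * (p - q) * ((n:ℝ) + ((sv l : ℝ) + (∑ y, ((nv y : ℝ) - (sv y : ℝ)) * T l y)) - ((sv k : ℝ) + (∑ y, ((nv y : ℝ) - (sv y : ℝ)) * T k y))) :=
    mul_pos (mul_pos (hsR k) hr) hbr
  by_contra hcon
  push_neg at hcon
  nlinarith [hX, hP, mul_pos (hD k) hnpos, hcon]
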